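/- Let V be artinian local with m^(m0+1) = 0, C = C(Z_p, V), and M a C-module supported at finitely many points α_1, …, α_s ∈ Z_p. Then the annihilator of M in C equals the product (a_1 : α_1)·(a_2 : α_2)⋯(a_s : α_s), where a_i ⊆ V is the annihilator in V of the stalk M_{α_i} and (a:α) = {φ ∈ C : φ(α) ∈ a}. -/
import Mathlib


/-- Evaluation at `α ∈ ℤ_p` as a ring homomorphism on `C(ℤ_p, V)`. -/
noncomputable def evalHom (V : Type*) [CommRing V] (p : ℕ) [Fact p.Prime] (α : ℤ_[p]) :
    LocallyConstant ℤ_[p] V →+* V where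
  toFun φ := φ α
  map_one' := rfl
  map_mul' _ _ := rfl
  map_zero' := rfl
  map_add' _ _ := rfl

/-- The constant-functions ring homomorphism `V → C(ℤ_p, V)`. -/
noncomputable def constHom (V : Type*) [CommRing V] (p : ℕ) [Fact p.Prime] :
    V →+* LocallyConstant ℤ_[p] V where
  toFun v := LocallyConstant.const ℤ_[p] v
  map_one' := rfl
  map_mul' _ _ := rfl
  map_zero' := rfl
  map_add' _ _ := rfl

section Helpers

variable {X : Type*} [TopologicalSpace X] {R : Type*} [CommRing R]

/-- The indicator function of a clopen set, as a locally constant function. -/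
noncomputable def clInd (U : Set X) (hU : IsClopen U) : LocallyConstant X R :=
  LocallyConstant.indicator 1 hU

lemma clInd_apply_of_mem {U : Set X} (hU : IsClopen U) {a : X} (h : a ∈ U) :
    (clInd U hU : LocallyConstant X R) a = 1 := by
  rw [clInd, LocallyConstant.indicator_of_mem (1 : LocallyConstant X R) hU h]; rfl

lemma clInd_apply_of_notMem {U : Set X} (hU : IsClopen U) {a : X} (h : a ∉ U) :
    (clInd U hU : LocallyConstant X R) a = 0 :=
  LocallyConstant.indicator_of_notMem (1 : LocallyConstant X R) hU h

lemma clInd_mul_eq_const {U : Set X} (hU : IsClopen U) (φ : LocallyConstant X R) (c : R)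
    (h : ∀ x ∈ U, φ x = c) :
    clInd U hU * φ = clInd U hU * LocallyConstant.const X c := by
  ext x
  show clInd U hU x * φ x = clInd U hU x * c
  by_cases hx : x ∈ U
  · rw [h x hx]
  · rw [clInd_apply_of_notMem hU hx, zero_mul, zero_mul]

/-- Evaluation as a ring hom (general version). -/
noncomputable def evalRH (x : X) : LocallyConstant X R →+* R where
  toFun f := f x
  map_one' := rfl
  map_mul' _ _ := rfl
  map_zero' := rfl
  map_add' _ _ := rfl

lemma eq_zero_of_isUnit_smul {R N : Type*} [CommRing R] [AddCommGroup N] [Module R N]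
    {r : R} (h : IsUnit r) {n : N} (hn : r • n = 0) : n = 0 := by
  obtain ⟨w, rfl⟩ := h
  have h2 := congrArg (fun m => (↑w⁻¹ : R) • m) hn
  simpa [smul_smul] using h2

lemma eq_zero_of_clopen_cover [CompactSpace X]
    {N : Type*} [AddCommGroup N] [Module (LocallyConstant X R) N] (y : N)
    (W : X → Set X) (hW : ∀ α, IsClopen (W α)) (hmem : ∀ α, α ∈ W α)
    (hkill : ∀ α, (clInd (W α) (hW α) : LocallyConstant X R) • y = 0) : y = 0 := by
  classical
  obtain ⟨t, ht⟩ := IsCompact.elim_finite_subcover isCompact_univ W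
    (fun α => (hW α).isOpen) (fun x _ => Set.mem_iUnion.2 ⟨x, hmem x⟩)
  have hprod : (∏ α ∈ t, (1 - clInd (W α) (hW α)) : LocallyConstant X R) = 0 := by
    ext x
    obtain ⟨α, hα, hxα⟩ := Set.mem_iUnion₂.1 (ht (Set.mem_univ x))
    have : evalRH x (∏ α ∈ t, (1 - clInd (W α) (hW α)) : LocallyConstant X R) = 0 := by
      rw [map_prod]
      refine Finset.prod_eq_zero hα ?_
      show (1 - clInd (W α) (hW α) : LocallyConstant X R) x = 0
      show (1 : LocallyConstant X R) x - (clInd (W α) (hW α) : LocallyConstant X R) x = 0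
      rw [clInd_apply_of_mem (hW α) hxα]
      show (1 : R) - 1 = 0
      ring
    exact this
  have hPy : ∀ t' : Finset X, (∏ α ∈ t', (1 - clInd (W α) (hW α)) : LocallyConstant X R) • y = y := by
    intro t'
    induction t' using Finset.induction_on with
    | empty => simpa using one_smul (LocallyConstant X R) y
    | @insert a t'' ha ih =>
      rw [Finset.prod_insert ha, mul_smul, ih, sub_smul, one_smul, hkill, sub_zero]
  rw [← hPy t, hprod, zero_smul]

end Helpers

/-- The ideal `(a_α : α)` of the statement. -/
noncomputable def Jid (V : Type*) [CommRing V] [IsLocalRing V] (p : ℕ) [Fact p.Prime]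
    (M : Type*) [AddCommGroup M] [Module (LocallyConstant ℤ_[p] V) M] (α : ℤ_[p]) :
    Ideal (LocallyConstant ℤ_[p] V) :=
  Ideal.comap (evalHom V p α)
    (Ideal.comap (constHom V p)
      (Module.annihilator (LocallyConstant ℤ_[p] V)
        (LocalizedModule
          (((IsLocalRing.maximalIdeal V).comap (evalHom V p α)).primeCompl) M)))

lemma mem_Jid {V : Type*} [CommRing V] [IsLocalRing V] {p : ℕ} [Fact p.Prime]
    {M : Type*} [AddCommGroup M] [Module (LocallyConstant ℤ_[p] V) M] {α : ℤ_[p]}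
    {φ : LocallyConstant ℤ_[p] V} :
    φ ∈ Jid V p M α ↔
      LocallyConstant.const ℤ_[p] (φ α) ∈
        Module.annihilator (LocallyConstant ℤ_[p] V)
          (LocalizedModule
            (((IsLocalRing.maximalIdeal V).comap (evalHom V p α)).primeCompl) M) :=
  Iff.rfl

lemma le_prod_of_pairwise_comax {R ι : Type*} [CommRing R] (t : Finset ι) (I : Ideal R)
    (J : ι → Ideal R) (hle : ∀ i ∈ t, I ≤ J i)
    (hco : ∀ i ∈ t, ∀ j ∈ t, i ≠ j → J i ⊔ J j = ⊤) :
    I ≤ ∏ i ∈ t, J i := by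
  classical
  induction t using Finset.induction_on with
  | empty => simp
  | @insert a t ha ih =>
    rw [Finset.prod_insert ha,
      Ideal.mul_eq_inf_of_coprime (Ideal.sup_prod_eq_top fun i hi =>
        hco a (Finset.mem_insert_self a t) i (Finset.mem_insert_of_mem hi)
          (fun h => ha (h ▸ hi)))]
    exact le_inf (hle a (Finset.mem_insert_self a t))
      (ih (fun i hi => hle i (Finset.mem_insert_of_mem hi))
        (fun i hi j hj hij =>
          hco i (Finset.mem_insert_of_mem hi) j (Finset.mem_insert_of_mem hj) hij))

/-- If a `C(ℤ_p,V)`-module `M` is supported at the finitely many points of `s`, then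
`Ann_C(M) = ∏_{α ∈ s} (a_α : α)`, where `a_α ⊆ V` is the annihilator of the stalk `M_α`
over `V` (the `V`-action being through constant functions), and
`(a : α) = {φ : φ(α) ∈ a}` is the preimage of `a` under evaluation at `α`. -/
theorem stmt12 (V : Type*) [CommRing V] [IsLocalRing V]
    (p m0 : ℕ) [Fact p.Prime]
    (hm : IsLocalRing.maximalIdeal V ^ (m0 + 1) = ⊥)
    (M : Type*) [AddCommGroup M] [Module (LocallyConstant ℤ_[p] V) M]
    (s : Finset ℤ_[p])
    (hs : ∀ α : ℤ_[p], α ∉ s → Subsingleton (LocalizedModule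
      (((IsLocalRing.maximalIdeal V).comap (evalHom V p α)).primeCompl) M)) :
    Module.annihilator (LocallyConstant ℤ_[p] V) M =
      ∏ α ∈ s, Ideal.comap (evalHom V p α)
        (Ideal.comap (constHom V p)
          (Module.annihilator (LocallyConstant ℤ_[p] V)
            (LocalizedModule
              (((IsLocalRing.maximalIdeal V).comap (evalHom V p α)).primeCompl) M))) := by
  classical
  show Module.annihilator (LocallyConstant ℤ_[p] V) M = ∏ α ∈ s, Jid V p M α
  -- units from non-membership in the pulled-back maximal ideal
  have hunit_of : ∀ (α : ℤ_[p]) (u : LocallyConstant ℤ_[p] V),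
      u ∉ (IsLocalRing.maximalIdeal V).comap (evalHom V p α) → IsUnit (u α) := by
    intro α u hu
    by_contra h
    exact hu (Ideal.mem_comap.2 ((IsLocalRing.mem_maximalIdeal _).2 (mem_nonunits_iff.2 h)))
  -- Step B : Ann M ≤ Jid α for every α ∈ s
  have stepB : ∀ α ∈ s, Module.annihilator (LocallyConstant ℤ_[p] V) M ≤ Jid V p M α := by
    intro α _ φ hφ
    rw [mem_Jid, Module.mem_annihilator]
    intro n
    induction n using LocalizedModule.induction_on with
    | h x u =>
      rw [LocalizedModule.smul'_mk]
      rw [show (0 : LocalizedModule _ M) = LocalizedModule.mk 0 u from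
        (LocalizedModule.zero_mk u).symm]
      rw [LocalizedModule.mk_eq]
      have hD : IsClopen {z : ℤ_[p] | φ z = φ α} := φ.isLocallyConstant.isClopen_fiber _
      set e : LocallyConstant ℤ_[p] V := clInd _ hD with he
      have heα : e α = 1 := clInd_apply_of_mem hD rfl
      have hmemS : e ∈ ((IsLocalRing.maximalIdeal V).comap (evalHom V p α)).primeCompl := by
        intro h
        have h1 : (1 : V) ∈ IsLocalRing.maximalIdeal V := by
          have := Ideal.mem_comap.1 h
          rwa [show (evalHom V p α) e = (1 : V) from heα] at this
        exact (mem_nonunits_iff.1 ((IsLocalRing.mem_maximalIdeal _).1 h1)) isUnit_one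
      refine ⟨⟨e, hmemS⟩, ?_⟩
      show e • ((u : LocallyConstant ℤ_[p] V) • (LocallyConstant.const ℤ_[p] (φ α) • x)) =
        e • ((u : LocallyConstant ℤ_[p] V) • (0 : M))
      rw [smul_zero, smul_zero, smul_smul, smul_smul]
      have h1 : e * φ = e * LocallyConstant.const ℤ_[p] (φ α) :=
        clInd_mul_eq_const hD φ _ (fun z hz => hz)
      have hcalc : (e : LocallyConstant ℤ_[p] V) * ↑u * LocallyConstant.const ℤ_[p] (φ α) =
          (↑u * e) * φ := by
        rw [show (e : LocallyConstant ℤ_[p] V) * ↑u * LocallyConstant.const ℤ_[p] (φ α) =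
          ↑u * (e * LocallyConstant.const ℤ_[p] (φ α)) by ring, ← h1]
        ring
      rw [hcalc, mul_smul, Module.mem_annihilator.1 hφ x, smul_zero]
  -- Step A : the intersection of the Jid α (α ∈ s) is contained in Ann M
  have stepA : ∀ φ : LocallyConstant ℤ_[p] V, (∀ α ∈ s, φ ∈ Jid V p M α) →
      φ ∈ Module.annihilator (LocallyConstant ℤ_[p] V) M := by
    intro φ hφ
    rw [Module.mem_annihilator]
    intro x
    have key : ∀ α : ℤ_[p], ∃ U : Set ℤ_[p], ∃ hU : IsClopen U, α ∈ U ∧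
        (clInd U hU : LocallyConstant ℤ_[p] V) • (φ • x) = 0 := by
      intro α
      by_cases hαs : α ∈ s
      · have hJ := mem_Jid.1 (hφ α hαs)
        have h0 := Module.mem_annihilator.1 hJ (LocalizedModule.mk x 1)
        rw [LocalizedModule.smul'_mk] at h0
        have h0' : (LocalizedModule.mk (LocallyConstant.const ℤ_[p] (φ α) • x)
            (1 : ((IsLocalRing.maximalIdeal V).comap (evalHom V p α)).primeCompl)) =
            LocalizedModule.mk 0 1 := h0.trans (LocalizedModule.zero_mk 1).symm
        obtain ⟨u, hu⟩ := LocalizedModule.mk_eq.1 h0'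
        rw [one_smul, one_smul, smul_zero, Submonoid.smul_def] at hu
        -- hu : ↑u • (const (φ α) • x) = 0
        have hunit : IsUnit ((u : LocallyConstant ℤ_[p] V) α) := hunit_of α _ u.2
        have hU : IsClopen ({z : ℤ_[p] | φ z = φ α} ∩
            {z : ℤ_[p] | (u : LocallyConstant ℤ_[p] V) z = (u : LocallyConstant ℤ_[p] V) α}) :=
          (φ.isLocallyConstant.isClopen_fiber _).inter
            ((u : LocallyConstant ℤ_[p] V).isLocallyConstant.isClopen_fiber _)
        set e : LocallyConstant ℤ_[p] V := clInd _ hU with he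
        have h1 : e * φ = e * LocallyConstant.const ℤ_[p] (φ α) :=
          clInd_mul_eq_const hU φ _ (fun z hz => hz.1)
        have h2 : e * (u : LocallyConstant ℤ_[p] V) =
            e * LocallyConstant.const ℤ_[p] ((u : LocallyConstant ℤ_[p] V) α) :=
          clInd_mul_eq_const hU _ _ (fun z hz => hz.2)
        refine ⟨_, hU, ⟨rfl, rfl⟩, ?_⟩
        apply eq_zero_of_isUnit_smul (hunit.map (constHom V p))
        have hcalc : (constHom V p ((u : LocallyConstant ℤ_[p] V) α) * e) * φ =
            e * ((u : LocallyConstant ℤ_[p] V) * LocallyConstant.const ℤ_[p] (φ α)) := by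
          show (LocallyConstant.const ℤ_[p] ((u : LocallyConstant ℤ_[p] V) α) * e) * φ = _
          rw [show (LocallyConstant.const ℤ_[p] ((u : LocallyConstant ℤ_[p] V) α) * e) * φ =
            LocallyConstant.const ℤ_[p] ((u : LocallyConstant ℤ_[p] V) α) * (e * φ) by ring, h1]
          rw [show LocallyConstant.const ℤ_[p] ((u : LocallyConstant ℤ_[p] V) α) *
            (e * LocallyConstant.const ℤ_[p] (φ α)) =
            (e * LocallyConstant.const ℤ_[p] ((u : LocallyConstant ℤ_[p] V) α)) *
              LocallyConstant.const ℤ_[p] (φ α) by ring, ← h2]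
          ring
        rw [smul_smul, smul_smul, hcalc, mul_smul, mul_smul, hu, smul_zero]
      · have hsub := hs α hαs
        have h0 : (LocalizedModule.mk x
            (1 : ((IsLocalRing.maximalIdeal V).comap (evalHom V p α)).primeCompl)) =
            LocalizedModule.mk 0 1 := Subsingleton.elim _ _
        obtain ⟨u, hu⟩ := LocalizedModule.mk_eq.1 h0
        rw [one_smul, one_smul, smul_zero, Submonoid.smul_def] at hu
        -- hu : ↑u • x = 0
        have hunit : IsUnit ((u : LocallyConstant ℤ_[p] V) α) := hunit_of α _ u.2
        have hU : IsClopen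
            {z : ℤ_[p] | (u : LocallyConstant ℤ_[p] V) z = (u : LocallyConstant ℤ_[p] V) α} :=
          (u : LocallyConstant ℤ_[p] V).isLocallyConstant.isClopen_fiber _
        set e : LocallyConstant ℤ_[p] V := clInd _ hU with he
        have h2 : e * (u : LocallyConstant ℤ_[p] V) =
            e * LocallyConstant.const ℤ_[p] ((u : LocallyConstant ℤ_[p] V) α) :=
          clInd_mul_eq_const hU _ _ (fun z hz => hz)
        refine ⟨_, hU, rfl, ?_⟩
        apply eq_zero_of_isUnit_smul (hunit.map (constHom V p))
        have hcalc : (constHom V p ((u : LocallyConstant ℤ_[p] V) α) * e) * φ =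
            φ * (e * (u : LocallyConstant ℤ_[p] V)) := by
          show (LocallyConstant.const ℤ_[p] ((u : LocallyConstant ℤ_[p] V) α) * e) * φ = _
          rw [show (LocallyConstant.const ℤ_[p] ((u : LocallyConstant ℤ_[p] V) α) * e) * φ =
            φ * (e * LocallyConstant.const ℤ_[p] ((u : LocallyConstant ℤ_[p] V) α)) by ring, ← h2]
        rw [smul_smul, smul_smul, hcalc, mul_smul, mul_smul, hu, smul_zero, smul_zero]
    choose U hU hmem hkill using key
    exact eq_zero_of_clopen_cover (φ • x) U hU hmem hkill
  -- Step C : pairwise comaximality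
  have hcomax : ∀ α ∈ s, ∀ β ∈ s, α ≠ β → Jid V p M α ⊔ Jid V p M β = ⊤ := by
    intro α _ β _ hne
    obtain ⟨U, hU, hβU, hαU⟩ := exists_isClopen_of_totally_separated (Ne.symm hne)
    set e : LocallyConstant ℤ_[p] V := clInd U hU with he
    have h1 : e ∈ Jid V p M α := by
      rw [mem_Jid, show e α = (0 : V) from clInd_apply_of_notMem hU hαU]
      rw [show LocallyConstant.const ℤ_[p] (0 : V) = 0 from rfl]
      exact zero_mem _
    have h2 : 1 - e ∈ Jid V p M β := by
      rw [mem_Jid]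
      have : (1 - e) β = (0 : V) := by
        show (1 : LocallyConstant ℤ_[p] V) β - e β = 0
        rw [clInd_apply_of_mem hU hβU]
        show (1 : V) - 1 = 0
        ring
      rw [this, show LocallyConstant.const ℤ_[p] (0 : V) = 0 from rfl]
      exact zero_mem _
    rw [Ideal.eq_top_iff_one, show (1 : LocallyConstant ℤ_[p] V) = e + (1 - e) by ring]
    exact Submodule.add_mem _ (Ideal.mem_sup_left h1) (Ideal.mem_sup_right h2)
  apply le_antisymm
  · exact le_prod_of_pairwise_comax s _ _ stepB hcomax
  · intro φ hφ
    exact stepA φ (fun α hα => (Finset.inf_le (f := fun α => Jid V p M α) hα) (Ideal.prod_le_inf hφ))
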